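/- Let (u_k) and (a_k) be nonnegative real sequences and (S_k) a nondecreasing sequence with S_0 ≥ u_0². If for all k ≥ 0, u_k² ≤ S_k + Σ_{i=1}^{k} a_i u_i, then for all k, u_k ≤ (1/2)Σ_{i=1}^{k} a_i + sqrt((1/2 Σ_{i=1}^{k} a_i)² + S_k). -/

import Mathlib

open Finset

theorem nonneg_sequence_bound
    (u a S : ℕ → ℝ)
    (hu : ∀ k, 0 ≤ u k) (ha : ∀ k, 0 ≤ a k)
    (hS : Monotone S) (hS0 : u 0 ^ 2 ≤ S 0)
    (hrec : ∀ k, u k ^ 2 ≤ S k + ∑ i ∈ Finset.Icc 1 k, a i * u i) :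
    ∀ k, u k ≤ (1 / 2) * ∑ i ∈ Finset.Icc 1 k, a i +
      Real.sqrt (((1 / 2) * ∑ i ∈ Finset.Icc 1 k, a i) ^ 2 + S k) := by
  intro k
  -- pick j ≤ k maximizing u
  obtain ⟨j, hjmem, hjmax⟩ := Finset.exists_max_image (Finset.Icc 0 k) u ⟨k, by simp⟩
  have hjk : j ≤ k := (Finset.mem_Icc.mp hjmem).2
  set A : ℝ := (1 / 2) * ∑ i ∈ Finset.Icc 1 k, a i with hA
  have hAnn : 0 ≤ A := by
    apply mul_nonneg (by norm_num)
    exact Finset.sum_nonneg fun i _ => ha i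
  have huk : u k ≤ u j := hjmax k (by simp)
  have key : u j ^ 2 ≤ S k + 2 * A * u j := by
    calc u j ^ 2 ≤ S j + ∑ i ∈ Finset.Icc 1 j, a i * u i := hrec j
      _ ≤ S k + ∑ i ∈ Finset.Icc 1 j, a i * u j := by
          gcongr with i hi
          · exact hS hjk
          · exact ha i
          · exact hjmax i (Finset.mem_Icc.mpr ⟨Nat.zero_le _, le_trans (Finset.mem_Icc.mp hi).2 hjk⟩)
      _ ≤ S k + ∑ i ∈ Finset.Icc 1 k, a i * u j := by
          gcongr _ + ?_
          exact Finset.sum_le_sum_of_subset_of_nonneg (Finset.Icc_subset_Icc le_rfl hjk)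
            (fun i _ _ => mul_nonneg (ha i) (hu j))
      _ = S k + 2 * A * u j := by
          rw [← Finset.sum_mul, hA]; ring
  have hsq : (u j - A) ^ 2 ≤ A ^ 2 + S k := by nlinarith [key]
  have : u j - A ≤ Real.sqrt (A ^ 2 + S k) := by
    calc u j - A ≤ |u j - A| := le_abs_self _
      _ = Real.sqrt ((u j - A) ^ 2) := (Real.sqrt_sq_eq_abs _).symm
      _ ≤ Real.sqrt (A ^ 2 + S k) := Real.sqrt_le_sqrt hsq
  linarith [huk]
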